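/- For all matrices X, W ∈ ℝ^{n×p}, the identity ⟨X·(XᵀX − I_p), W·A(X) − X·Φ(Xᵀ·W)⟩ = −(3/2)·⟨(XᵀX − I_p)², Φ(Xᵀ·W)⟩ holds. Consequently, if f is differentiable then ⟨X·(XᵀX − I_p), ∇g(X)⟩ = −(3/2)·⟨(XᵀX − I_p)², Φ(Xᵀ·G(X))⟩ for every X ∈ ℝ^{n×p}. -/

import Mathlib

open Matrix

attribute [local instance] Matrix.frobeniusNormedAddCommGroup Matrix.frobeniusNormedSpace

namespace ExPen

noncomputable def finner {n p : ℕ} (A B : Matrix (Fin n) (Fin p) ℝ) : ℝ := (Aᵀ * B).trace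

noncomputable def Phi {p : ℕ} (M : Matrix (Fin p) (Fin p) ℝ) : Matrix (Fin p) (Fin p) ℝ :=
  (1 / 2 : ℝ) • (M + Mᵀ)

noncomputable def Amap {n p : ℕ} (X : Matrix (Fin n) (Fin p) ℝ) : Matrix (Fin p) (Fin p) ℝ :=
  (3 / 2 : ℝ) • (1 : Matrix (Fin p) (Fin p) ℝ) - (1 / 2 : ℝ) • (Xᵀ * X)

noncomputable def g {n p : ℕ} (f : Matrix (Fin n) (Fin p) ℝ → ℝ)
    (X : Matrix (Fin n) (Fin p) ℝ) : ℝ := f (X * Amap X)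

noncomputable def hpen {n p : ℕ} (f : Matrix (Fin n) (Fin p) ℝ → ℝ) (β : ℝ)
    (X : Matrix (Fin n) (Fin p) ℝ) : ℝ := g f X + β / 4 * ‖Xᵀ * X - 1‖ ^ 2

noncomputable def dualCLM {n p : ℕ} (G : Matrix (Fin n) (Fin p) ℝ) :
    Matrix (Fin n) (Fin p) ℝ →L[ℝ] ℝ :=
  LinearMap.toContinuousLinearMap
    { toFun := fun D => (Gᵀ * D).trace
      map_add' := by intro D E; simp [Matrix.mul_add]
      map_smul' := by intro c D; simp [Matrix.mul_smul] }

def HasGradAt {n p : ℕ} (φ : Matrix (Fin n) (Fin p) ℝ → ℝ)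
    (X G : Matrix (Fin n) (Fin p) ℝ) : Prop :=
  HasFDerivAt φ (dualCLM G) X

noncomputable def specNorm {n p : ℕ} (X : Matrix (Fin n) (Fin p) ℝ) : ℝ :=
  ‖LinearMap.toContinuousLinearMap
    (Matrix.toEuclideanLin X : EuclideanSpace ℝ (Fin p) →ₗ[ℝ] EuclideanSpace ℝ (Fin n))‖

lemma posSemidef_tmul {n p : ℕ} (X : Matrix (Fin n) (Fin p) ℝ) : (Xᵀ * X).PosSemidef := by
  simpa [Matrix.conjTranspose_eq_transpose_of_trivial] using
    Matrix.posSemidef_conjTranspose_mul_self X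

/-- The positive semidefinite square root, as defined in the older Mathlib (since removed). -/
noncomputable def _root_.Matrix.PosSemidef.sqrt {m : Type*} [Fintype m] [DecidableEq m]
    {A : Matrix m m ℝ} (hA : A.PosSemidef) : Matrix m m ℝ :=
  (hA.1.eigenvectorUnitary : Matrix m m ℝ) * diagonal ((↑) ∘ (√·) ∘ hA.1.eigenvalues) *
    (star (hA.1.eigenvectorUnitary : Matrix m m ℝ))

noncomputable def Pst {n p : ℕ} (X : Matrix (Fin n) (Fin p) ℝ) : Matrix (Fin n) (Fin p) ℝ :=
  X * ((posSemidef_tmul X).sqrt)⁻¹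



noncomputable def mulCLM (n p q : ℕ) :
    Matrix (Fin n) (Fin p) ℝ →L[ℝ] Matrix (Fin p) (Fin q) ℝ →L[ℝ] Matrix (Fin n) (Fin q) ℝ :=
  LinearMap.mkContinuous₂
    (LinearMap.mk₂ ℝ (· * ·) (fun A B C => Matrix.add_mul A B C)
      (fun c A B => Matrix.smul_mul c A B) (fun A B C => Matrix.mul_add A B C)
      (fun c A B => Matrix.mul_smul A c B)) 1
    (fun A B => by simpa using Matrix.frobenius_norm_mul A B)

@[simp] lemma mulCLM_apply {n p q : ℕ} (A : Matrix (Fin n) (Fin p) ℝ)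
    (B : Matrix (Fin p) (Fin q) ℝ) : mulCLM n p q A B = A * B := rfl

noncomputable def tCLM (n p : ℕ) :
    Matrix (Fin n) (Fin p) ℝ →L[ℝ] Matrix (Fin p) (Fin n) ℝ :=
  LinearMap.toContinuousLinearMap
    { toFun := fun A => Aᵀ
      map_add' := fun A B => transpose_add A B
      map_smul' := fun c A => transpose_smul c A }

@[simp] lemma tCLM_apply {n p : ℕ} (A : Matrix (Fin n) (Fin p) ℝ) : tCLM n p A = Aᵀ := rfl

lemma part1 {n p : ℕ} (X W : Matrix (Fin n) (Fin p) ℝ) :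
    finner (X * (Xᵀ * X - 1)) (W * Amap X - X * Phi (Xᵀ * W)) =
      -(3 / 2) * finner ((Xᵀ * X - 1) ^ 2) (Phi (Xᵀ * W)) := by
  set P := Xᵀ * X with hP
  set S := P - 1 with hS
  set M := Xᵀ * W with hM
  have hPt : Pᵀ = P := by simp [hP, transpose_mul]
  have hSt : Sᵀ = S := by simp [hS, transpose_sub, hPt]
  have hSP : S * P = P * S := by rw [hS]; noncomm_ring
  have hSS : S * P = S * S + S := by rw [hS]; noncomm_ring
  have h1 : (S * (M * P)).trace = (S * (P * M)).trace := by
    rw [← Matrix.mul_assoc, trace_mul_comm (S * M) P, ← Matrix.mul_assoc, ← hSP,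
      Matrix.mul_assoc]
  have h2 : (S * (P * Mᵀ)).trace = (S * (P * M)).trace := by
    rw [← Matrix.mul_assoc, ← trace_transpose (S * P * Mᵀ), transpose_mul,
      transpose_transpose, transpose_mul, hSt, hPt, trace_mul_comm, ← Matrix.mul_assoc,
      ← hSP, Matrix.mul_assoc (S * P) Xᵀ W, ← hM, Matrix.mul_assoc]
  have h3 : (S * (S * Mᵀ)).trace = (S * (S * M)).trace := by
    rw [← Matrix.mul_assoc, ← trace_transpose (S * S * Mᵀ), transpose_mul,
      transpose_transpose, transpose_mul, hSt, trace_mul_comm, Matrix.mul_assoc]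
  have hL : finner (X * S) (W * Amap X - X * Phi M) =
      (3/2) * (S * M).trace - (1/2) * (S * (M * P)).trace
        - ((1/2) * (S * (P * M)).trace + (1/2) * (S * (P * Mᵀ)).trace) := by
    simp [finner, Amap, Phi, transpose_mul, hSt, Matrix.mul_sub, Matrix.sub_mul,
      Matrix.mul_add, Matrix.add_mul, Matrix.mul_smul, Matrix.smul_mul, Matrix.mul_one,
      trace_sub, trace_add, trace_smul, Matrix.mul_assoc, ← hM, ← hP, smul_eq_mul]
    rw [← Matrix.mul_assoc Xᵀ W P, ← Matrix.mul_assoc Xᵀ X M, ← Matrix.mul_assoc Xᵀ X Mᵀ,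
      ← hM, ← hP]
  have hR : finner (S ^ 2) (Phi M) =
      (1/2) * (S * (S * M)).trace + (1/2) * (S * (S * Mᵀ)).trace := by
    simp [finner, Phi, pow_two, transpose_mul, hSt, Matrix.mul_add,
      trace_add, trace_smul, Matrix.mul_assoc, smul_eq_mul]
  have hSPM : (S * (P * M)).trace = (S * (S * M)).trace + (S * M).trace := by
    rw [← Matrix.mul_assoc, hSS, Matrix.add_mul, trace_add, Matrix.mul_assoc]
  rw [hL, hR, h1, h2, h3, hSPM]
  ring

lemma sym {n p : ℕ} (X V W : Matrix (Fin n) (Fin p) ℝ) :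
    finner V (W * Amap X - X * Phi (Xᵀ * W)) = finner W (V * Amap X - X * Phi (Xᵀ * V)) := by
  have hPt : (Xᵀ * X)ᵀ = Xᵀ * X := by simp [transpose_mul]
  have e1 : (Vᵀ * W).trace = (Wᵀ * V).trace := by
    rw [← trace_transpose (Vᵀ * W), transpose_mul, transpose_transpose]
  have e2 : (Vᵀ * (W * (Xᵀ * X))).trace = (Wᵀ * (V * (Xᵀ * X))).trace := by
    rw [← Matrix.mul_assoc, ← trace_transpose (Vᵀ * W * (Xᵀ * X))]
    simp only [transpose_mul, transpose_transpose, hPt]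
    rw [trace_mul_comm, Matrix.mul_assoc]
  have e3 : (Vᵀ * (X * (Xᵀ * W))).trace = (Wᵀ * (X * (Xᵀ * V))).trace := by
    rw [← Matrix.mul_assoc, ← Matrix.mul_assoc, ← trace_transpose (Vᵀ * X * Xᵀ * W)]
    simp [transpose_mul, Matrix.mul_assoc]
  have e4 : (Vᵀ * (X * (Wᵀ * X))).trace = (Wᵀ * (X * (Vᵀ * X))).trace := by
    rw [← Matrix.mul_assoc, trace_mul_comm (Vᵀ * X) (Wᵀ * X), Matrix.mul_assoc]
  simp [finner, Amap, Phi, transpose_mul, Matrix.mul_sub, Matrix.sub_mul,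
    Matrix.mul_add, Matrix.mul_smul, Matrix.smul_mul, Matrix.mul_one,
    trace_sub, trace_add, trace_smul, Matrix.mul_assoc, smul_eq_mul]
  rw [e1, e2, e3, e4]

lemma part2 {n p : ℕ} (f : Matrix (Fin n) (Fin p) ℝ → ℝ)
    (gradf : Matrix (Fin n) (Fin p) ℝ → Matrix (Fin n) (Fin p) ℝ)
    (hgradf : ∀ Y, HasGradAt f Y (gradf Y))
    (gradg : Matrix (Fin n) (Fin p) ℝ → Matrix (Fin n) (Fin p) ℝ)
    (hgradg : ∀ Y, HasGradAt (g f) Y (gradg Y))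
    (X : Matrix (Fin n) (Fin p) ℝ) :
    finner (X * (Xᵀ * X - 1)) (gradg X) =
      finner (gradf (X * Amap X))
        ((X * (Xᵀ * X - 1)) * Amap X - X * Phi (Xᵀ * (X * (Xᵀ * X - 1)))) := by
  set G := gradf (X * Amap X) with hG
  set V := X * (Xᵀ * X - 1) with hV
  have hq := (mulCLM p n p).hasFDerivAt_of_bilinear
    ((tCLM n p).hasFDerivAt (x := X)) (hasFDerivAt_id X)
  have hA := HasFDerivAt.const_sub (hq.const_smul ((1:ℝ)/2))
    ((3/2 : ℝ) • (1 : Matrix (Fin p) (Fin p) ℝ))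
  have hm := (mulCLM n p p).hasFDerivAt_of_bilinear (hasFDerivAt_id X) hA
  have hf' : HasFDerivAt f (dualCLM G) (X * Amap X) := hgradf _
  have hgf := HasFDerivAt.comp X hf' hm
  have h1 : HasFDerivAt (g f) (dualCLM (gradg X)) X := hgradg X
  have key := h1.unique hgf
  have hval := DFunLike.congr_fun key V
  erw [ContinuousLinearMap.comp_apply] at hval
  simp only [dualCLM, ContinuousLinearMap.coe_comp', Function.comp_apply,
    ContinuousLinearMap.add_apply, ContinuousLinearMap.precompR_apply,
    ContinuousLinearMap.precompL_apply, mulCLM_apply, tCLM_apply,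
    ContinuousLinearMap.id_apply, ContinuousLinearMap.neg_apply,
    ContinuousLinearMap.smul_apply, LinearMap.coe_toContinuousLinearMap',
    LinearMap.coe_mk, AddHom.coe_mk, ContinuousLinearMap.coe_id',
    ContinuousLinearMap.compL_apply, id_eq] at hval
  change ((gradg X)ᵀ * V).trace = (Gᵀ * (X * -((1/2:ℝ) • (Xᵀ * V + Vᵀ * X)) +
    V * ((3/2:ℝ) • 1 - (1/2:ℝ) • (Xᵀ * X)))).trace at hval
  have hmat : X * -((1/2:ℝ) • (Xᵀ * V + Vᵀ * X)) + V * ((3/2:ℝ) • 1 - (1/2:ℝ) • (Xᵀ * X))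
      = V * Amap X - X * Phi (Xᵀ * V) := by
    rw [Amap, Phi, transpose_mul Xᵀ V, transpose_transpose, Matrix.mul_neg]
    abel
  have hfin : finner V (gradg X) = ((gradg X)ᵀ * V).trace := by
    rw [finner, ← trace_transpose (Vᵀ * gradg X), transpose_mul, transpose_transpose]
  rw [hfin, hval, hmat, finner]

theorem statement_3 {n p : ℕ} (f : Matrix (Fin n) (Fin p) ℝ → ℝ)
    (gradf : Matrix (Fin n) (Fin p) ℝ → Matrix (Fin n) (Fin p) ℝ)
    (hgradf : ∀ Y, HasGradAt f Y (gradf Y))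
    (gradg : Matrix (Fin n) (Fin p) ℝ → Matrix (Fin n) (Fin p) ℝ)
    (hgradg : ∀ Y, HasGradAt (g f) Y (gradg Y)) :
    (∀ X W : Matrix (Fin n) (Fin p) ℝ,
      finner (X * (Xᵀ * X - 1)) (W * Amap X - X * Phi (Xᵀ * W)) =
        -(3 / 2) * finner ((Xᵀ * X - 1) ^ 2) (Phi (Xᵀ * W))) ∧
    (∀ X : Matrix (Fin n) (Fin p) ℝ,
      finner (X * (Xᵀ * X - 1)) (gradg X) =
        -(3 / 2) * finner ((Xᵀ * X - 1) ^ 2) (Phi (Xᵀ * gradf (X * Amap X)))) := by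
  refine ⟨fun X W => part1 X W, fun X => ?_⟩
  calc finner (X * (Xᵀ * X - 1)) (gradg X)
      = finner (gradf (X * Amap X))
          ((X * (Xᵀ * X - 1)) * Amap X - X * Phi (Xᵀ * (X * (Xᵀ * X - 1)))) :=
        part2 f gradf hgradf gradg hgradg X
    _ = finner (X * (Xᵀ * X - 1))
          (gradf (X * Amap X) * Amap X - X * Phi (Xᵀ * gradf (X * Amap X))) :=
        (sym X (X * (Xᵀ * X - 1)) (gradf (X * Amap X))).symm
    _ = -(3 / 2) * finner ((Xᵀ * X - 1) ^ 2) (Phi (Xᵀ * gradf (X * Amap X))) :=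
        part1 X (gradf (X * Amap X))


end ExPen
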